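/- Let K be the subgroup of SO(4) consisting of the block-diagonal matrices diag(A, I₂) with A ∈ SO(2). Then the normalizer of K in SO(4) is exactly the subgroup S(O(2)×O(2)) of block-diagonal matrices diag(C, D) with C, D ∈ O(2) and det(C)·det(D) = 1. -/

import Mathlib

open Matrix

set_option maxHeartbeats 1000000

/-- The copy of `SO(2) × Id₂` inside `SO(4)`: block-diagonal matrices `diag(A, I₂)`
with `A ∈ SO(2)`. -/
def Kset : Set (Matrix (Fin 4) (Fin 4) ℝ) :=
  {k | ∃ A : Matrix (Fin 2) (Fin 2) ℝ, A ∈ Matrix.orthogonalGroup (Fin 2) ℝ ∧ A.det = 1 ∧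
        k = !![A 0 0, A 0 1, 0, 0;
               A 1 0, A 1 1, 0, 0;
               0, 0, 1, 0;
               0, 0, 0, 1]}

lemma o2_mul_transpose {C : Matrix (Fin 2) (Fin 2) ℝ}
    (h : C ∈ Matrix.orthogonalGroup (Fin 2) ℝ) : C * Cᵀ = 1 := by
  rw [Matrix.mem_orthogonalGroup_iff] at h
  simpa using h

lemma o2_transpose_mul {C : Matrix (Fin 2) (Fin 2) ℝ}
    (h : C ∈ Matrix.orthogonalGroup (Fin 2) ℝ) : Cᵀ * C = 1 := by
  rw [Matrix.mem_orthogonalGroup_iff'] at h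
  simpa using h

lemma o2_transpose_mem {C : Matrix (Fin 2) (Fin 2) ℝ}
    (h : C ∈ Matrix.orthogonalGroup (Fin 2) ℝ) : Cᵀ ∈ Matrix.orthogonalGroup (Fin 2) ℝ := by
  rw [Matrix.mem_orthogonalGroup_iff]
  simpa using o2_transpose_mul h

lemma conj_mem (C D : Matrix (Fin 2) (Fin 2) ℝ)
    (hC : C ∈ Matrix.orthogonalGroup (Fin 2) ℝ) (hD : D ∈ Matrix.orthogonalGroup (Fin 2) ℝ)
    (k : Matrix (Fin 4) (Fin 4) ℝ) (hk : k ∈ Kset) :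
    (!![C 0 0, C 0 1, 0, 0; C 1 0, C 1 1, 0, 0;
        0, 0, D 0 0, D 0 1; 0, 0, D 1 0, D 1 1] : Matrix (Fin 4) (Fin 4) ℝ) * k *
    (!![C 0 0, C 0 1, 0, 0; C 1 0, C 1 1, 0, 0;
        0, 0, D 0 0, D 0 1; 0, 0, D 1 0, D 1 1] : Matrix (Fin 4) (Fin 4) ℝ)ᵀ ∈ Kset := by
  obtain ⟨A, hA, hAdet, rfl⟩ := hk
  have hCt := o2_transpose_mul hC
  have hCC := o2_mul_transpose hC
  have hAA := o2_mul_transpose hA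
  have hDD := o2_mul_transpose hD
  have hD00 : D 0 0 * D 0 0 + D 0 1 * D 0 1 = 1 := by
    have := congrFun (congrFun hDD 0) 0
    simpa [Matrix.mul_apply, Fin.sum_univ_two] using this
  have hD01 : D 0 0 * D 1 0 + D 0 1 * D 1 1 = 0 := by
    have := congrFun (congrFun hDD 0) 1
    simpa [Matrix.mul_apply, Fin.sum_univ_two] using this
  have hD11 : D 1 0 * D 1 0 + D 1 1 * D 1 1 = 1 := by
    have := congrFun (congrFun hDD 1) 1
    simpa [Matrix.mul_apply, Fin.sum_univ_two] using this
  refine ⟨C * A * Cᵀ, ?_, ?_, ?_⟩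
  · rw [Matrix.mem_orthogonalGroup_iff]
    simp only [star_eq_conjTranspose, conjTranspose_eq_transpose_of_trivial,
      transpose_mul, transpose_transpose]
    calc C * A * Cᵀ * (C * (Aᵀ * Cᵀ)) = C * (A * ((Cᵀ * C) * (Aᵀ * Cᵀ))) := by
          simp only [mul_assoc]
      _ = C * ((A * Aᵀ) * Cᵀ) := by rw [hCt]; simp only [one_mul, mul_assoc]
      _ = 1 := by rw [hAA, one_mul, hCC]
  · have h1 : C.det * C.det = 1 := by
      have := congrArg Matrix.det hCC
      simpa [Matrix.det_mul] using this
    simp only [Matrix.det_mul, Matrix.det_transpose, hAdet]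
    linear_combination h1
  · have htr : (!![C 0 0, C 0 1, 0, 0; C 1 0, C 1 1, 0, 0;
        0, 0, D 0 0, D 0 1; 0, 0, D 1 0, D 1 1] : Matrix (Fin 4) (Fin 4) ℝ)ᵀ =
        !![C 0 0, C 1 0, 0, 0; C 0 1, C 1 1, 0, 0;
           0, 0, D 0 0, D 1 0; 0, 0, D 0 1, D 1 1] := by
      ext i j; fin_cases i <;> fin_cases j <;> rfl
    rw [htr]
    ext i j
    fin_cases i <;> fin_cases j <;>
      simp [Matrix.mul_apply, Matrix.transpose_apply, Fin.sum_univ_four, Fin.sum_univ_two,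
        Matrix.vecHead, Matrix.vecTail] <;>
      ring_nf <;> linarith [hD00, hD01, hD11]

/-- The normalizer of `K` in `SO(4)` is exactly `S(O(2) × O(2))`: block-diagonal
matrices `diag(C, D)` with `C, D ∈ O(2)` and `det C · det D = 1`. -/
theorem stmt5 (g : Matrix (Fin 4) (Fin 4) ℝ)
    (hg : g ∈ Matrix.orthogonalGroup (Fin 4) ℝ) (hdet : g.det = 1) :
    (∀ k, k ∈ Kset ↔ g * k * g⁻¹ ∈ Kset) ↔
      ∃ C D : Matrix (Fin 2) (Fin 2) ℝ,
        C ∈ Matrix.orthogonalGroup (Fin 2) ℝ ∧ D ∈ Matrix.orthogonalGroup (Fin 2) ℝ ∧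
        C.det * D.det = 1 ∧
        g = !![C 0 0, C 0 1, 0, 0;
               C 1 0, C 1 1, 0, 0;
               0, 0, D 0 0, D 0 1;
               0, 0, D 1 0, D 1 1] := by
  have hgt : g * gᵀ = 1 := by
    have hg' := hg
    rw [Matrix.mem_orthogonalGroup_iff] at hg'; simpa using hg'
  have htg : gᵀ * g = 1 := by
    have hg' := hg
    rw [Matrix.mem_orthogonalGroup_iff'] at hg'; simpa using hg'
  have hinv : g⁻¹ = gᵀ := Matrix.inv_eq_right_inv hgt
  constructor
  · -- forward: normalizing implies block-diagonal
    intro hnorm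
    have hk₀ : (!![0,-1,0,0;1,0,0,0;0,0,1,0;0,0,0,1] : Matrix (Fin 4) (Fin 4) ℝ) ∈ Kset := by
      refine ⟨!![0,-1;1,0], ?_, by simp [Matrix.det_fin_two], by norm_num⟩
      rw [Matrix.mem_orthogonalGroup_iff]
      ext i j
      fin_cases i <;> fin_cases j <;> simp [Matrix.mul_apply, Fin.sum_univ_two]
    obtain ⟨B, hB, hBdet, heq⟩ := (hnorm _).mp hk₀
    rw [hinv] at heq
    set k₀ : Matrix (Fin 4) (Fin 4) ℝ := !![0,-1,0,0;1,0,0,0;0,0,1,0;0,0,0,1] with hk₀def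
    have htr : B 0 0 + B 1 1 = 0 := by
      have t1 : Matrix.trace (g * k₀ * gᵀ) = Matrix.trace k₀ := by
        rw [Matrix.trace_mul_cycle, htg, one_mul]
      rw [heq] at t1
      simp [Matrix.trace, Matrix.diag, Fin.sum_univ_four, hk₀def] at t1
      linarith
    have hBdet' : B 0 0 * B 1 1 - B 0 1 * B 1 0 = 1 := by
      rw [Matrix.det_fin_two] at hBdet; linarith
    have h2 : g * k₀ = !![B 0 0, B 0 1, 0, 0; B 1 0, B 1 1, 0, 0;
        0, 0, 1, 0; 0, 0, 0, 1] * g := by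
      calc g * k₀ = g * k₀ * (gᵀ * g) := by rw [htg, mul_one]
        _ = (g * k₀ * gᵀ) * g := by rw [mul_assoc, mul_assoc, mul_assoc]
        _ = _ := by rw [heq]
    have entry : ∀ i j, (g * k₀) i j = (!![B 0 0, B 0 1, 0, 0; B 1 0, B 1 1, 0, 0;
        0, 0, 1, 0; 0, 0, 0, 1] * g) i j := fun i j => by rw [h2]
    have e02 := entry 0 2
    have e12 := entry 1 2
    have e03 := entry 0 3
    have e13 := entry 1 3
    have e20 := entry 2 0
    have e21 := entry 2 1
    have e30 := entry 3 0
    have e31 := entry 3 1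
    simp [hk₀def, Matrix.mul_apply, Fin.sum_univ_four, Matrix.vecHead, Matrix.vecTail]
      at e02 e12 e03 e13 e20 e21 e30 e31
    have hg20 : g 2 0 = 0 := by linarith
    have hg21 : g 2 1 = 0 := by linarith
    have hg30 : g 3 0 = 0 := by linarith
    have hg31 : g 3 1 = 0 := by linarith
    have hg02 : g 0 2 = 0 := by
      linear_combination ((1 - B 1 1)/2) * e02 + (B 0 1/2) * e12
        - (g 0 2/2) * hBdet' + (g 0 2/2) * htr
    have hg12 : g 1 2 = 0 := by
      linear_combination (B 1 0/2) * e02 + ((1 - B 0 0)/2) * e12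
        - (g 1 2/2) * hBdet' + (g 1 2/2) * htr
    have hg03 : g 0 3 = 0 := by
      linear_combination ((1 - B 1 1)/2) * e03 + (B 0 1/2) * e13
        - (g 0 3/2) * hBdet' + (g 0 3/2) * htr
    have hg13 : g 1 3 = 0 := by
      linear_combination (B 1 0/2) * e03 + ((1 - B 0 0)/2) * e13
        - (g 1 3/2) * hBdet' + (g 1 3/2) * htr
    refine ⟨!![g 0 0, g 0 1; g 1 0, g 1 1], !![g 2 2, g 2 3; g 3 2, g 3 3], ?_, ?_, ?_, ?_⟩
    · have f00 := congrFun (congrFun hgt 0) 0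
      have f01 := congrFun (congrFun hgt 0) 1
      have f11 := congrFun (congrFun hgt 1) 1
      simp [Matrix.mul_apply, Fin.sum_univ_four, hg02, hg03, hg12, hg13] at f00 f01 f11
      rw [Matrix.mem_orthogonalGroup_iff]
      ext i j
      fin_cases i <;> fin_cases j <;>
        simp [Matrix.mul_apply, Fin.sum_univ_two, Matrix.vecHead, Matrix.vecTail] <;>
        linarith
    · have f22 := congrFun (congrFun hgt 2) 2
      have f23 := congrFun (congrFun hgt 2) 3
      have f33 := congrFun (congrFun hgt 3) 3
      simp [Matrix.mul_apply, Fin.sum_univ_four, hg20, hg21, hg30, hg31] at f22 f23 f33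
      rw [Matrix.mem_orthogonalGroup_iff]
      ext i j
      fin_cases i <;> fin_cases j <;>
        simp [Matrix.mul_apply, Fin.sum_univ_two, Matrix.vecHead, Matrix.vecTail] <;>
        linarith
    · have hgeq : g = !![g 0 0, g 0 1, 0, 0; g 1 0, g 1 1, 0, 0;
          0, 0, g 2 2, g 2 3; 0, 0, g 3 2, g 3 3] := by
        ext i j
        fin_cases i <;> fin_cases j <;>
          simp [hg02, hg03, hg12, hg13, hg20, hg21, hg30, hg31, Matrix.vecHead, Matrix.vecTail]
      rw [hgeq] at hdet
      simp [Matrix.det_succ_row_zero, Fin.sum_univ_succ, Fin.succAbove] at hdet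
      simp [Matrix.det_fin_two]
      linear_combination hdet
    · ext i j
      fin_cases i <;> fin_cases j <;>
        simp [hg02, hg03, hg12, hg13, hg20, hg21, hg30, hg31, Matrix.vecHead, Matrix.vecTail]
  · -- backward: block-diagonal implies normalizing
    rintro ⟨C, D, hC, hD, hCD, hgeq⟩ k
    constructor
    · intro hk
      rw [hinv, hgeq]
      exact conj_mem C D hC hD k hk
    · intro hk
      have h3 := conj_mem Cᵀ Dᵀ (o2_transpose_mem hC) (o2_transpose_mem hD) _ hk
      have hMb : (!![Cᵀ 0 0, Cᵀ 0 1, 0, 0; Cᵀ 1 0, Cᵀ 1 1, 0, 0;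
          0, 0, Dᵀ 0 0, Dᵀ 0 1; 0, 0, Dᵀ 1 0, Dᵀ 1 1] : Matrix (Fin 4) (Fin 4) ℝ) = gᵀ := by
        rw [hgeq]
        ext i j
        fin_cases i <;> fin_cases j <;> rfl
      rw [hMb, hinv] at h3
      have hfin : gᵀ * (g * k * gᵀ) * gᵀᵀ = k := by
        rw [transpose_transpose]
        calc gᵀ * (g * k * gᵀ) * g = (gᵀ * g) * (k * (gᵀ * g)) := by
              simp only [mul_assoc]
          _ = k := by rw [htg, one_mul, mul_one]
      rwa [hfin] at h3
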